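/- Let g : ℤⁿ → ℝ ∪ {∞} be an L-convex function (with g(x+𝟏) = g(x)) attaining its minimum. Suppose the steepest descent algorithm starts at x⁰ with g(x⁰) < ∞ and at each step replaces the current point x by a minimizer of g over x + {0,1}ⁿ. Let k = min{‖x⁰ − y*‖_∞ : y* is a minimizer of g with y* ≥ x⁰}. Then the point obtained after k iterations is a global minimizer of g. -/

import Mathlib

def distInf {n : ℕ} (x y : Fin n → ℤ) : ℕ :=
  Finset.univ.sup fun i => (x i - y i).natAbs

lemma distInf_le_iff {n : ℕ} {x y : Fin n → ℤ} {d : ℕ} :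
    distInf x y ≤ d ↔ ∀ i, (x i - y i).natAbs ≤ d := by
  simp [distInf, Finset.sup_le_iff]

lemma eq_of_distInf_eq_zero {n : ℕ} {x y : Fin n → ℤ} (h : distInf x y ≤ 0) : x = y := by
  funext i
  have := distInf_le_iff.mp h i
  omega

lemma translate_const {n : ℕ} (g : (Fin n → ℤ) → WithTop ℝ)
    (hlin : ∀ x : Fin n → ℤ, g (x + 1) = g x) :
    ∀ (c : ℕ) (z : Fin n → ℤ), g (z + fun _ => (c : ℤ)) = g z := by
  intro c
  induction c with
  | zero =>
    intro z
    have : (z + fun _ : Fin n => ((0 : ℕ) : ℤ)) = z := by funext i; simp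
    rw [this]
  | succ c ih =>
    intro z
    have : (z + fun _ : Fin n => ((c + 1 : ℕ) : ℤ)) = (z + fun _ => (c : ℤ)) + 1 := by
      funext i; simp [Pi.add_apply]; push_cast; ring
    rw [this, hlin, ih]

lemma step_lemma {n : ℕ} (g : (Fin n → ℤ) → WithTop ℝ)
    (hsub : ∀ x y : Fin n → ℤ, g (x ⊓ y) + g (x ⊔ y) ≤ g x + g y)
    (hlin : ∀ x : Fin n → ℤ, g (x + 1) = g x)
    (x u : Fin n → ℤ) (hu : ∀ j, u j = 0 ∨ u j = 1)
    (hfin : g x ≠ ⊤)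
    (hopt : ∀ v : Fin n → ℤ, (∀ j, v j = 0 ∨ v j = 1) → g (x + u) ≤ g (x + v))
    (y : Fin n → ℤ) (hy : ∀ z, g y ≤ g z) (hxy : x ≤ y)
    (d : ℕ) (hd : distInf x y ≤ d) :
    ∃ y', (∀ z, g y' ≤ g z) ∧ x + u ≤ y' ∧ distInf (x + u) y' ≤ d - 1 := by
  have hx'le : g (x + u) ≤ g x := by
    have h0 : (x + (0 : Fin n → ℤ)) = x := by simp
    have := hopt 0 (fun j => Or.inl rfl)
    rwa [h0] at this
  have hx'fin : g (x + u) ≠ ⊤ := fun h => hfin (top_le_iff.mp (h ▸ hx'le))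
  match d with
  | 0 =>
    -- x = y, so x is a minimizer, and so is x + u
    have hxeq : x = y := eq_of_distInf_eq_zero hd
    refine ⟨x + u, fun z => hx'le.trans (by rw [hxeq]; exact hy z), le_refl _, ?_⟩
    apply distInf_le_iff.mpr; intro i; simp
  | (m + 1) =>
    set c : ℤ := (m : ℤ) with hc
    have hcnn : (0:ℤ) ≤ c := Int.natCast_nonneg m
    have hbound : ∀ i, 0 ≤ y i - x i ∧ y i - x i ≤ m + 1 := by
      intro i
      have h1 : x i ≤ y i := hxy i
      have h2 : (x i - y i).natAbs ≤ m + 1 := distInf_le_iff.mp hd i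
      omega
    set x' := x + u with hx'
    -- inequality 1 : y₁ := (x' + const c) ⊓ y is a minimizer
    set y₁ := (x' + fun _ => c) ⊓ y with hy₁
    have htr := translate_const g hlin m
    have key1 : g y₁ ≤ g y := by
      have w : Fin n → ℤ := fun i => max (u i) (y i - x i - c)
      have hw : ∀ j, (fun i => max (u i) (y i - x i - c)) j = 0 ∨ (fun i => max (u i) (y i - x i - c)) j = 1 := by
        intro j
        have := hbound j
        rcases hu j with h | h <;> simp only [] <;> omega
      have hsupeq : ((x' + fun _ => c) ⊔ y) = (x + fun i => max (u i) (y i - x i - c)) + fun _ => c := by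
        funext i
        simp only [Pi.sup_apply, Pi.add_apply, hx']
        omega
      have h1 := hsub (x' + fun _ => c) y
      rw [hsupeq, htr, htr] at h1
      have h2 : g x' ≤ g (x + fun i => max (u i) (y i - x i - c)) := hopt _ hw
      have h3 : g x' + g y₁ ≤ g x' + g y := by
        calc g x' + g y₁ = g y₁ + g x' := add_comm _ _
        _ ≤ g y₁ + g (x + fun i => max (u i) (y i - x i - c)) := add_le_add_right h2 _
        _ ≤ g x' + g y := h1
      exact (WithTop.add_le_add_iff_left hx'fin).mp h3
    have hy₁min : ∀ z, g y₁ ≤ g z := fun z => key1.trans (hy z)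
    -- inequality 2 : y' := x' ⊔ y₁ is a minimizer
    set y' := x' ⊔ y₁ with hy'
    have hmeet : x' ⊓ y₁ = x + fun i => min (u i) (y i - x i) := by
      funext i
      simp only [Pi.inf_apply, Pi.add_apply, hx', hy₁]
      have := hbound i
      omega
    have hv : ∀ j, (fun i => min (u i) (y i - x i)) j = 0 ∨ (fun i => min (u i) (y i - x i)) j = 1 := by
      intro j
      have := hbound j
      rcases hu j with h | h <;> simp only [] <;> omega
    have key2 : g y' ≤ g y₁ := by
      have h1 := hsub x' y₁
      rw [hmeet] at h1
      have h2 : g x' ≤ g (x + fun i => min (u i) (y i - x i)) := hopt _ hv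
      have h3 : g x' + g y' ≤ g x' + g y₁ := by
        calc g x' + g y' = g y' + g x' := add_comm _ _
        _ ≤ g y' + g (x + fun i => min (u i) (y i - x i)) := add_le_add_right h2 _
        _ = g (x + fun i => min (u i) (y i - x i)) + g y' := add_comm _ _
        _ ≤ g x' + g y₁ := h1
      exact (WithTop.add_le_add_iff_left hx'fin).mp h3
    refine ⟨y', fun z => key2.trans (hy₁min z), le_sup_left, ?_⟩
    apply distInf_le_iff.mpr
    intro i
    have h1 := hbound i
    rcases hu i with h | h <;>
      simp only [hy', hy₁, hx', Pi.sup_apply, Pi.inf_apply, Pi.add_apply] <;>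
      omega

/-- Iteration bound for the steepest descent algorithm for an L-convex function `g` on `ℤⁿ`:
if the sequence `x` starts at a point of finite value and at each step moves to a minimizer
of `g` over `xⁱ + {0,1}ⁿ`, and `k` is the minimum ℓ∞-distance from `x 0` to a minimizer
`y* ≥ x 0`, then `x k` is a global minimizer of `g`. -/
theorem steepest_descent_bound {n : ℕ} (g : (Fin n → ℤ) → WithTop ℝ)
    (hsub : ∀ x y : Fin n → ℤ, g (x ⊓ y) + g (x ⊔ y) ≤ g x + g y)
    (hlin : ∀ x : Fin n → ℤ, g (x + 1) = g x)
    (x : ℕ → Fin n → ℤ) (hx0 : g (x 0) ≠ ⊤)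
    (hstep : ∀ i : ℕ,
      (∃ u : Fin n → ℤ, (∀ j, u j = 0 ∨ u j = 1) ∧ x (i + 1) = x i + u) ∧
      (∀ u : Fin n → ℤ, (∀ j, u j = 0 ∨ u j = 1) → g (x (i + 1)) ≤ g (x i + u)))
    (k : ℕ) (y : Fin n → ℤ)
    (hy : ∀ z, g y ≤ g z) (hyge : x 0 ≤ y) (hyk : distInf (x 0) y = k)
    (hkmin : ∀ z : Fin n → ℤ, (∀ w, g z ≤ g w) → x 0 ≤ z → k ≤ distInf (x 0) z) :
    ∀ z, g (x k) ≤ g z := by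
  have inv : ∀ i : ℕ, g (x i) ≠ ⊤ ∧
      ∃ y', (∀ z, g y' ≤ g z) ∧ x i ≤ y' ∧ distInf (x i) y' ≤ k - i := by
    intro i
    induction i with
    | zero =>
      exact ⟨hx0, y, hy, hyge, by rw [Nat.sub_zero]; exact le_of_eq hyk⟩
    | succ i ih =>
      obtain ⟨hfin, y', hy', hle, hdist⟩ := ih
      obtain ⟨⟨u, hu, hxi1⟩, hoptstep⟩ := hstep i
      have hopt : ∀ v : Fin n → ℤ, (∀ j, v j = 0 ∨ v j = 1) → g (x i + u) ≤ g (x i + v) := by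
        intro v hv; rw [← hxi1]; exact hoptstep v hv
      have hs := step_lemma g hsub hlin (x i) u hu hfin hopt y' hy' hle (k - i) hdist
      rw [← hxi1] at hs
      obtain ⟨y'', h1, h2, h3⟩ := hs
      have hfin' : g (x (i + 1)) ≠ ⊤ := by
        have hle' : g (x (i + 1)) ≤ g (x i) := by
          have h0 : (x i + (0 : Fin n → ℤ)) = x i := by simp
          have := hoptstep 0 (fun j => Or.inl rfl)
          rwa [h0] at this
        exact fun h => hfin (top_le_iff.mp (h ▸ hle'))
      exact ⟨hfin', y'', h1, h2, le_trans h3 (by omega)⟩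
  obtain ⟨-, y', hy', -, hdist⟩ := inv k
  have hk0 : distInf (x k) y' ≤ 0 := by omega
  have hxk : x k = y' := eq_of_distInf_eq_zero hk0
  intro z; rw [hxk]; exact hy' z
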